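/- For a bounded kernel with bound M_k and unit vector f, if X_1,…,X_n, Y_1,…,Y_n are i.i.d. from P with within-group covariance operator Σ having eigenpair (λ, f), then for all δ > 0, P((1/n) Σ_{i=1}^n ⟨f, φ(X_i) − φ(Y_i)⟩² − 2λ < −8 M_k √(δ/n)) ≤ e^{−δ}. -/

import Mathlib

open MeasureTheory ProbabilityTheory
open scoped RealInnerProductSpace

/-- The rank-one operator `f ⊗ g : h ↦ ⟪g, h⟫ f`. -/
noncomputable def rankOne {H : Type*} [NormedAddCommGroup H] [InnerProductSpace ℝ H]
    (f g : H) : H →L[ℝ] H :=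
  (innerSL ℝ g).smulRight f



lemma exp_le_one_add_add_sq {x : ℝ} (hx : |x| ≤ 1) : Real.exp x ≤ 1 + x + x ^ 2 := by
  have h := Real.exp_bound hx (n := 2) (by norm_num)
  have h2 : ∑ i ∈ Finset.range 2, x ^ i / (Nat.factorial i) = 1 + x := by
    simp [Finset.sum_range_succ]
  rw [h2] at h
  have h3 := (abs_le.1 h).2
  have h4 : |x| ^ 2 = x ^ 2 := sq_abs x
  rw [h4] at h3
  have h5 : ((Nat.succ 2 : ℕ) : ℝ) / ((Nat.factorial 2 : ℕ) * (2:ℕ)) = 3 / 4 := by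
    norm_num [Nat.factorial]
  nlinarith [sq_nonneg x, h5]

lemma mgf_le_of_abs_le {Ω : Type*} [MeasurableSpace Ω] {ν : Measure Ω} [IsProbabilityMeasure ν]
    {X : Ω → ℝ} (hXm : Measurable X) {c s : ℝ} (hc : 0 ≤ c)
    (hb : ∀ᵐ ω ∂ν, |X ω| ≤ c) (hmean : ∫ ω, X ω ∂ν = 0) (hs : 0 ≤ s) (hsc : s * c ≤ 1) :
    mgf X ν s ≤ Real.exp (s ^ 2 * c ^ 2) := by
  have hXint : Integrable X ν :=
    Integrable.mono' (integrable_const c) hXm.aestronglyMeasurable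
      (hb.mono fun ω h => by simpa using h)
  have hX2int : Integrable (fun ω => X ω ^ 2) ν :=
    Integrable.mono' (integrable_const (c ^ 2)) (hXm.pow_const 2).aestronglyMeasurable
      (hb.mono fun ω h => by
        have : |X ω| ^ 2 ≤ c ^ 2 := pow_le_pow_left₀ (abs_nonneg _) h 2
        simpa [abs_pow] using this)
  have hexpint : Integrable (fun ω => Real.exp (s * X ω)) ν := by
    refine Integrable.mono' (integrable_const (Real.exp 1))
      ((hXm.const_mul s).exp).aestronglyMeasurable (hb.mono fun ω h => ?_)
    rw [Real.norm_eq_abs, abs_of_pos (Real.exp_pos _), Real.exp_le_exp]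
    calc s * X ω ≤ s * |X ω| := by nlinarith [le_abs_self (X ω)]
    _ ≤ s * c := by nlinarith
    _ ≤ 1 := hsc
  have key : ∀ᵐ ω ∂ν, Real.exp (s * X ω) ≤ 1 + s * X ω + s ^ 2 * X ω ^ 2 := by
    filter_upwards [hb] with ω h
    have habs : |s * X ω| ≤ 1 := by
      rw [abs_mul, abs_of_nonneg hs]
      calc s * |X ω| ≤ s * c := by nlinarith
      _ ≤ 1 := hsc
    have := exp_le_one_add_add_sq habs
    calc Real.exp (s * X ω) ≤ 1 + s * X ω + (s * X ω) ^ 2 := this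
    _ = 1 + s * X ω + s ^ 2 * X ω ^ 2 := by ring
  have hrint : Integrable (fun ω => 1 + s * X ω + s ^ 2 * X ω ^ 2) ν := by
    exact ((integrable_const 1).add (hXint.const_mul s)).add (hX2int.const_mul (s ^ 2))
  have h1 : mgf X ν s ≤ ∫ ω, (1 + s * X ω + s ^ 2 * X ω ^ 2) ∂ν :=
    integral_mono_ae hexpint hrint key
  have h2 : ∫ ω, (1 + s * X ω + s ^ 2 * X ω ^ 2) ∂ν = 1 + s ^ 2 * ∫ ω, X ω ^ 2 ∂ν := by
    have hi12 : Integrable (fun ω => 1 + s * X ω) ν :=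
      (integrable_const 1).add (hXint.const_mul s)
    have hi1 : Integrable (fun _ : Ω => (1:ℝ)) ν := integrable_const 1
    rw [integral_add hi12 (hX2int.const_mul (s ^ 2)),
      integral_add hi1 (hXint.const_mul s), integral_const,
      integral_const_mul, integral_const_mul, hmean]
    simp
  have h3 : ∫ ω, X ω ^ 2 ∂ν ≤ c ^ 2 := by
    calc ∫ ω, X ω ^ 2 ∂ν ≤ ∫ _, c ^ 2 ∂ν := by
          refine integral_mono_ae hX2int (integrable_const _) ?_
          filter_upwards [hb] with ω h
          calc X ω ^ 2 = |X ω| ^ 2 := (sq_abs _).symm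
          _ ≤ c ^ 2 := pow_le_pow_left₀ (abs_nonneg _) h 2
    _ = c ^ 2 := by simp
  calc mgf X ν s ≤ 1 + s ^ 2 * ∫ ω, X ω ^ 2 ∂ν := h1.trans_eq h2
  _ ≤ 1 + s ^ 2 * c ^ 2 := by nlinarith [sq_nonneg s]
  _ ≤ Real.exp (s ^ 2 * c ^ 2) := by
      have := Real.add_one_le_exp (s ^ 2 * c ^ 2)
      linarith

lemma indep_pair_sum {Ω Zt : Type*} [MeasurableSpace Ω] [MeasurableSpace Zt]
    {μ : Measure Ω} {n : ℕ} {V : Fin n ⊕ Fin n → Ω → Zt}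
    (hVmeas : ∀ j, Measurable (V j))
    (hVindep : iIndepFun V μ)
    {q : Zt → Zt → ℝ} (hq : Measurable fun p : Zt × Zt => q p.1 p.2)
    {i : Fin n} {s : Finset (Fin n)} (hi : i ∉ s) :
    IndepFun (fun ω => q (V (Sum.inl i) ω) (V (Sum.inr i) ω))
      (fun ω => ∑ j ∈ s, q (V (Sum.inl j) ω) (V (Sum.inr j) ω)) μ := by
  classical
  set S : Finset (Fin n ⊕ Fin n) := {Sum.inl i, Sum.inr i} with hS
  set T : Finset (Fin n ⊕ Fin n) := s.image Sum.inl ∪ s.image Sum.inr with hT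
  have hST : Disjoint S T := by
    rw [Finset.disjoint_left]
    intro x hxS hxT
    simp only [hS, hT, Finset.mem_insert, Finset.mem_singleton, Finset.mem_union,
      Finset.mem_image] at hxS hxT
    rcases hxS with rfl | rfl <;> rcases hxT with ⟨j, hj, hj'⟩ | ⟨j, hj, hj'⟩ <;>
      simp_all <;> exact hi (hj' ▸ hj)
  have h := hVindep.indepFun_finset S T hST hVmeas
  have hil : Sum.inl i ∈ S := by simp [hS]
  have hir : Sum.inr i ∈ S := by simp [hS]
  have hmem₁ : ∀ j ∈ s, Sum.inl j ∈ T := fun j hj => by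
    rw [hT, Finset.mem_union]; exact Or.inl (Finset.mem_image_of_mem _ hj)
  have hmem₂ : ∀ j ∈ s, Sum.inr j ∈ T := fun j hj => by
    rw [hT, Finset.mem_union]; exact Or.inr (Finset.mem_image_of_mem _ hj)
  set gS : (S → Zt) → ℝ := fun x => q (x ⟨Sum.inl i, hil⟩) (x ⟨Sum.inr i, hir⟩) with hgSdef
  set gT : (T → Zt) → ℝ := fun x =>
    ∑ j ∈ s.attach, q (x ⟨Sum.inl j.1, hmem₁ j.1 j.2⟩) (x ⟨Sum.inr j.1, hmem₂ j.1 j.2⟩) with hgTdef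
  have hgS : Measurable gS := by
    have : gS = (fun p : Zt × Zt => q p.1 p.2) ∘
        fun x : S → Zt => (x ⟨Sum.inl i, hil⟩, x ⟨Sum.inr i, hir⟩) := rfl
    rw [this]
    exact hq.comp ((measurable_pi_apply _).prodMk (measurable_pi_apply _))
  have hgT : Measurable gT := by
    rw [hgTdef]
    refine Finset.measurable_sum _ fun j _ => ?_
    have : (fun x : T → Zt => q (x ⟨Sum.inl j.1, hmem₁ j.1 j.2⟩) (x ⟨Sum.inr j.1, hmem₂ j.1 j.2⟩))
        = (fun p : Zt × Zt => q p.1 p.2) ∘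
          fun x : T → Zt => (x ⟨Sum.inl j.1, hmem₁ j.1 j.2⟩, x ⟨Sum.inr j.1, hmem₂ j.1 j.2⟩) := rfl
    rw [this]
    exact hq.comp ((measurable_pi_apply _).prodMk (measurable_pi_apply _))
  have h2 := h.comp hgS hgT
  have e1 : (gS ∘ fun a (i : S) => V i a)
      = fun ω => q (V (Sum.inl i) ω) (V (Sum.inr i) ω) := rfl
  have e2 : (gT ∘ fun a (i : T) => V i a)
      = fun ω => ∑ j ∈ s, q (V (Sum.inl j) ω) (V (Sum.inr j) ω) := by
    funext ω
    simp only [Function.comp_apply, hgTdef]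
    exact Finset.sum_attach s fun j => q (V (Sum.inl j) ω) (V (Sum.inr j) ω)
  rwa [e1, e2] at h2

lemma mgf_pair_sum {Ω Zt : Type*} [MeasurableSpace Ω] [MeasurableSpace Zt]
    {μ : Measure Ω} [IsProbabilityMeasure μ] {n : ℕ} {V : Fin n ⊕ Fin n → Ω → Zt}
    (hVmeas : ∀ j, Measurable (V j))
    (hVindep : iIndepFun V μ)
    {q : Zt → Zt → ℝ} (hq : Measurable fun p : Zt × Zt => q p.1 p.2)
    (t : ℝ) (s : Finset (Fin n)) :
    mgf (fun ω => ∑ j ∈ s, q (V (Sum.inl j) ω) (V (Sum.inr j) ω)) μ t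
      = ∏ j ∈ s, mgf (fun ω => q (V (Sum.inl j) ω) (V (Sum.inr j) ω)) μ t := by
  classical
  induction s using Finset.induction_on with
  | empty => simp [mgf]
  | insert _ _ hi ih =>
    rename_i i s
    have hq1 : ∀ j : Fin n, Measurable fun ω => q (V (Sum.inl j) ω) (V (Sum.inr j) ω) :=
      fun j => hq.comp ((hVmeas _).prodMk (hVmeas _))
    have hindep := indep_pair_sum hVmeas hVindep hq hi
    have hX : AEStronglyMeasurable
        (fun ω => Real.exp (t * q (V (Sum.inl i) ω) (V (Sum.inr i) ω))) μ :=
      (((hq1 i).const_mul t).exp).aestronglyMeasurable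
    have hY : AEStronglyMeasurable
        (fun ω => Real.exp (t * ∑ j ∈ s, q (V (Sum.inl j) ω) (V (Sum.inr j) ω))) μ := by
      refine Measurable.aestronglyMeasurable ?_
      exact ((Finset.measurable_sum s fun j _ => hq1 j).const_mul t).exp
    have hadd := hindep.mgf_add (t := t) hX hY
    have e : ((fun ω => q (V (Sum.inl i) ω) (V (Sum.inr i) ω)) +
        fun ω => ∑ j ∈ s, q (V (Sum.inl j) ω) (V (Sum.inr j) ω))
        = fun ω => ∑ j ∈ insert i s, q (V (Sum.inl j) ω) (V (Sum.inr j) ω) := by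
      funext ω; simp [Finset.sum_insert hi]
    rw [e] at hadd
    rw [hadd, ih, Finset.prod_insert hi]

set_option maxHeartbeats 1000000 in
/-- For a bounded kernel with bound `M_k`, a unit eigenvector `f` of the
covariance operator `Σ` of `P` with eigenvalue `λ`, and `X₁,…,Xₙ,Y₁,…,Yₙ` i.i.d. from `P`,
for all `δ > 0`:
`P((1/n) ∑ᵢ ⟪f, φ(Xᵢ) − φ(Yᵢ)⟫² − 2λ < −8 M_k √(δ/n)) ≤ e^{−δ}`. -/
theorem concentration_projected_variance
    {Zt H Ω : Type*} [NormedAddCommGroup H] [InnerProductSpace ℝ H] [CompleteSpace H]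
    [MeasurableSpace Zt] [MeasurableSpace Ω]
    (μ : Measure Ω) [IsProbabilityMeasure μ]
    (P : Measure Zt) [IsProbabilityMeasure P]
    (φ : Zt → H) (k : Zt → Zt → ℝ) (Mk : ℝ)
    (hrepr : ∀ z z', k z z' = ⟪φ z, φ z'⟫)
    (hbound : ∀ z, k z z ≤ Mk)
    (n : ℕ) (hn : 0 < n)
    (V : Fin n ⊕ Fin n → Ω → Zt)
    (hVmeas : ∀ j, Measurable (V j))
    (hVindep : iIndepFun V μ)
    (hVlaw : ∀ j, Measure.map (V j) μ = P)
    (hint₁ : Integrable (fun z => φ z) P)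
    (hint₂ : Integrable (fun z =>
      rankOne (φ z - ∫ z', φ z' ∂P) (φ z - ∫ z', φ z' ∂P)) P)
    (f : H) (hf : ‖f‖ = 1) (lam : ℝ)
    (heig : (∫ z, rankOne (φ z - ∫ z', φ z' ∂P) (φ z - ∫ z', φ z' ∂P) ∂P) f = lam • f)
    (δ : ℝ) (hδ : 0 < δ) :
    μ {ω | (n : ℝ)⁻¹ * (∑ i, ⟪f, φ (V (Sum.inl i) ω) - φ (V (Sum.inr i) ω)⟫ ^ 2)
        - 2 * lam < -(8 * Mk * Real.sqrt (δ / n))} ≤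
      ENNReal.ofReal (Real.exp (-δ)) := by
  classical
  -- basic facts
  have hnR : (0:ℝ) < n := Nat.cast_pos.mpr hn
  have hZt : Nonempty Zt := by
    by_contra h
    rw [not_nonempty_iff] at h
    have h1 : P Set.univ = 1 := measure_univ
    rw [Set.univ_eq_empty_iff.mpr h, measure_empty] at h1
    exact zero_ne_one h1
  have hMk0 : 0 ≤ Mk := by
    obtain ⟨z⟩ := hZt
    have h1 : 0 ≤ k z z := by rw [hrepr]; exact real_inner_self_nonneg
    linarith [hbound z]
  set b : Zt → ℝ := fun z => ⟪f, φ z⟫ with hbdef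
  have hnormφ : ∀ z, ‖φ z‖ ≤ Real.sqrt Mk := by
    intro z
    have h1 : ‖φ z‖ ^ 2 ≤ Mk := by
      rw [← real_inner_self_eq_norm_sq, ← hrepr]; exact hbound z
    calc ‖φ z‖ = Real.sqrt (‖φ z‖ ^ 2) := (Real.sqrt_sq (norm_nonneg _)).symm
    _ ≤ Real.sqrt Mk := Real.sqrt_le_sqrt h1
  have hb_bound : ∀ z, |b z| ≤ Real.sqrt Mk := by
    intro z
    calc |b z| ≤ ‖f‖ * ‖φ z‖ := abs_real_inner_le_norm f (φ z)
    _ = ‖φ z‖ := by rw [hf, one_mul]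
    _ ≤ Real.sqrt Mk := hnormφ z
  -- measurable version of the projected feature map
  have hφm : AEStronglyMeasurable φ P := hint₁.1
  set φ' : Zt → H := hφm.mk φ with hφ'def
  have hφ'sm : StronglyMeasurable φ' := hφm.stronglyMeasurable_mk
  have hφeq : φ =ᵐ[P] φ' := hφm.ae_eq_mk
  set a : Zt → ℝ := fun z => ⟪f, φ' z⟫ with hadef
  have ham : Measurable a := by
    have h1 : Continuous fun x : H => ⟪f, x⟫ := continuous_const.inner continuous_id
    exact (h1.comp_stronglyMeasurable hφ'sm).measurable
  have hab : a =ᵐ[P] b := by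
    filter_upwards [hφeq] with z hz
    simp only [hadef, hbdef, hz]
  have haeq : ∀ j, (fun ω => a (V j ω)) =ᵐ[μ] fun ω => b (V j ω) := by
    intro j
    have h1 : a =ᵐ[μ.map (V j)] b := by rw [hVlaw j]; exact hab
    exact ae_eq_comp (hVmeas j).aemeasurable h1
  have hbnd : ∀ j, ∀ᵐ ω ∂μ, |a (V j ω)| ≤ Real.sqrt Mk := by
    intro j
    filter_upwards [haeq j] with ω h
    rw [h]; exact hb_bound _
  -- the measurable squared projected differences
  set W : Fin n → Ω → ℝ :=
    fun i ω => (a (V (Sum.inl i) ω) - a (V (Sum.inr i) ω)) ^ 2 with hWdef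
  have hWmeas : ∀ i, Measurable (W i) := fun i =>
    ((ham.comp (hVmeas _)).sub (ham.comp (hVmeas _))).pow_const 2
  have hW0 : ∀ i ω, 0 ≤ W i ω := fun i ω => sq_nonneg _
  have hWb : ∀ i, ∀ᵐ ω ∂μ, W i ω ≤ 4 * Mk := by
    intro i
    filter_upwards [hbnd (Sum.inl i), hbnd (Sum.inr i)] with ω h1 h2
    have hsq : Real.sqrt Mk ^ 2 = Mk := Real.sq_sqrt hMk0
    show (a (V (Sum.inl i) ω) - a (V (Sum.inr i) ω)) ^ 2 ≤ 4 * Mk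
    nlinarith [abs_le.1 h1, abs_le.1 h2]
  have hWint : ∀ i, Integrable (W i) μ := by
    intro i
    refine Integrable.mono' (integrable_const (4 * Mk)) (hWmeas i).aestronglyMeasurable ?_
    filter_upwards [hWb i] with ω h
    rw [Real.norm_eq_abs, abs_of_nonneg (hW0 i ω)]; exact h
  -- event rewriting
  set T : ℝ := 8 * Mk * Real.sqrt (δ / n) with hTdef
  set E : Set Ω := {ω | (n : ℝ)⁻¹ * (∑ i, ⟪f, φ (V (Sum.inl i) ω) - φ (V (Sum.inr i) ω)⟫ ^ 2)
      - 2 * lam < -T} with hEdef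
  set E' : Set Ω := {ω | (n : ℝ)⁻¹ * (∑ i, W i ω) - 2 * lam < -T} with hE'def
  have hEE' : μ E = μ E' := by
    refine measure_congr ?_
    have hall : ∀ᵐ ω ∂μ, ∀ j, a (V j ω) = b (V j ω) := by
      rw [MeasureTheory.ae_all_iff]
      exact fun j => haeq j
    rw [Filter.eventuallyEq_set]
    filter_upwards [hall] with ω h
    have hsum : ∀ i : Fin n, ⟪f, φ (V (Sum.inl i) ω) - φ (V (Sum.inr i) ω)⟫ ^ 2 = W i ω := by
      intro i
      show _ = (a (V (Sum.inl i) ω) - a (V (Sum.inr i) ω)) ^ 2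
      rw [inner_sub_right, h (Sum.inl i), h (Sum.inr i)]
    simp only [hEdef, hE'def, Set.mem_setOf_eq]
    rw [Finset.sum_congr rfl fun i _ => hsum i]
  -- integrability of b, b^2 over P
  have hbasm : AEStronglyMeasurable b P := by
    have h1 : Continuous fun x : H => ⟪f, x⟫ := continuous_const.inner continuous_id
    exact h1.comp_aestronglyMeasurable hφm
  have hbint : Integrable b P :=
    Integrable.mono' (integrable_const (Real.sqrt Mk)) hbasm
      (Filter.Eventually.of_forall fun z => by rw [Real.norm_eq_abs]; exact hb_bound z)
  have hb2int : Integrable (fun z => b z ^ 2) P := by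
    refine Integrable.mono' (integrable_const Mk)
      ((hbasm.aemeasurable.pow_const 2).aestronglyMeasurable) ?_
    refine Filter.Eventually.of_forall fun z => ?_
    have h1 := hb_bound z
    have hsqr : Real.sqrt Mk ^ 2 = Mk := Real.sq_sqrt hMk0
    rw [Real.norm_eq_abs, abs_of_nonneg (sq_nonneg _), ← sq_abs]
    nlinarith [abs_nonneg (b z)]
  set c : ℝ := ⟪f, (∫ z', φ z' ∂P)⟫ with hcdef
  have hIb : ∫ z, b z ∂P = c := by
    simp only [hbdef, hcdef]
    exact integral_inner (𝕜 := ℝ) hint₁ f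
  -- lam as projected variance
  have hTfint : Integrable
      (fun z => (rankOne (φ z - ∫ z', φ z' ∂P) (φ z - ∫ z', φ z' ∂P)) f) P :=
    (ContinuousLinearMap.apply ℝ H f).integrable_comp hint₂
  have hlam1 : lam = ∫ z, (b z - c) ^ 2 ∂P := by
    have h1 : ⟪(∫ z, rankOne (φ z - ∫ z', φ z' ∂P) (φ z - ∫ z', φ z' ∂P) ∂P) f, f⟫
        = lam := by
      rw [heig, real_inner_smul_left, real_inner_self_eq_norm_mul_norm, hf]; ring
    rw [ContinuousLinearMap.integral_apply hint₂ f, real_inner_comm,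
      ← integral_inner (𝕜 := ℝ) hTfint f] at h1
    have h2 : ∀ z, ⟪f, (rankOne (φ z - ∫ z', φ z' ∂P) (φ z - ∫ z', φ z' ∂P)) f⟫
        = (b z - c) ^ 2 := by
      intro z
      have hg : (rankOne (φ z - ∫ z', φ z' ∂P) (φ z - ∫ z', φ z' ∂P)) f
          = ⟪φ z - ∫ z', φ z' ∂P, f⟫ • (φ z - ∫ z', φ z' ∂P) := rfl
      rw [hg, real_inner_smul_right]
      have h3 : ⟪φ z - ∫ z', φ z' ∂P, f⟫ = b z - c := by
        rw [real_inner_comm, inner_sub_right]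
      have h4 : ⟪f, φ z - (∫ z', φ z' ∂P)⟫ = b z - c := by
        rw [inner_sub_right]
      rw [h3, h4]; ring
    rw [← h1]
    exact integral_congr_ae (Filter.Eventually.of_forall fun z => h2 z)
  have hlam2 : lam = (∫ z, b z ^ 2 ∂P) - c ^ 2 := by
    rw [hlam1]
    have e : ∀ z : Zt, (b z - c) ^ 2 = (b z ^ 2 - (2 * c) * b z) + c ^ 2 := fun z => by ring
    rw [integral_congr_ae (Filter.Eventually.of_forall e)]
    have h1 : Integrable (fun z => b z ^ 2 - (2 * c) * b z) P :=
      hb2int.sub (hbint.const_mul (2 * c))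
    rw [integral_add h1 (integrable_const (c ^ 2)),
      integral_sub hb2int (hbint.const_mul (2 * c)), integral_const_mul, hIb, integral_const]
    simp
    ring
  -- moments over μ
  have hAasm : ∀ j, AEStronglyMeasurable (fun ω => a (V j ω)) μ := fun j =>
    (ham.comp (hVmeas j)).aestronglyMeasurable
  have hAint : ∀ j, Integrable (fun ω => a (V j ω)) μ := by
    intro j
    refine Integrable.mono' (integrable_const (Real.sqrt Mk)) (hAasm j) ?_
    filter_upwards [hbnd j] with ω h
    rwa [Real.norm_eq_abs]
  have hA2int : ∀ j, Integrable (fun ω => a (V j ω) ^ 2) μ := by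
    intro j
    refine Integrable.mono' (integrable_const Mk)
      (((ham.comp (hVmeas j)).pow_const 2).aestronglyMeasurable) ?_
    filter_upwards [hbnd j] with ω h
    rw [Real.norm_eq_abs, abs_of_nonneg (sq_nonneg _), ← sq_abs]
    nlinarith [abs_nonneg (a (V j ω)), Real.sq_sqrt hMk0]
  have hAmean : ∀ j, ∫ ω, a (V j ω) ∂μ = c := by
    intro j
    have h1 : ∫ ω, a (V j ω) ∂μ = ∫ z, a z ∂P := by
      rw [← hVlaw j]
      exact (integral_map (hVmeas j).aemeasurable ham.aestronglyMeasurable).symm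
    rw [h1, integral_congr_ae hab, hIb]
  have hA2mean : ∀ j, ∫ ω, a (V j ω) ^ 2 ∂μ = ∫ z, b z ^ 2 ∂P := by
    intro j
    have h1 : ∫ ω, a (V j ω) ^ 2 ∂μ = ∫ z, a z ^ 2 ∂P := by
      rw [← hVlaw j]
      exact (integral_map (hVmeas j).aemeasurable
        ((ham.pow_const 2).aestronglyMeasurable)).symm
    rw [h1]
    refine integral_congr_ae ?_
    filter_upwards [hab] with z hz
    rw [hz]
  have hEW : ∀ i, ∫ ω, W i ω ∂μ = 2 * lam := by
    intro i
    have hindep : IndepFun (fun ω => a (V (Sum.inl i) ω)) (fun ω => a (V (Sum.inr i) ω)) μ := by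
      have h0 : IndepFun (V (Sum.inl i)) (V (Sum.inr i)) μ :=
        hVindep.indepFun (by simp)
      exact h0.comp ham ham
    have hABint : Integrable (fun ω => a (V (Sum.inl i) ω) * a (V (Sum.inr i) ω)) μ := by
      refine Integrable.mono' (integrable_const Mk)
        ((hAasm (Sum.inl i)).mul (hAasm (Sum.inr i))) ?_
      filter_upwards [hbnd (Sum.inl i), hbnd (Sum.inr i)] with ω h1 h2
      rw [Real.norm_eq_abs, abs_mul]
      calc |a (V (Sum.inl i) ω)| * |a (V (Sum.inr i) ω)|
          ≤ Real.sqrt Mk * Real.sqrt Mk :=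
            mul_le_mul h1 h2 (abs_nonneg _) (Real.sqrt_nonneg _)
      _ = Mk := Real.mul_self_sqrt hMk0
    have hmul : ∫ ω, a (V (Sum.inl i) ω) * a (V (Sum.inr i) ω) ∂μ = c * c := by
      have := hindep.integral_mul_eq_mul_integral (hAasm (Sum.inl i)) (hAasm (Sum.inr i))
      rw [show ((fun ω => a (V (Sum.inl i) ω)) * fun ω => a (V (Sum.inr i) ω))
        = fun ω => a (V (Sum.inl i) ω) * a (V (Sum.inr i) ω) from rfl] at this
      rw [this, hAmean, hAmean]
    have he : ∀ ω, W i ω = (a (V (Sum.inl i) ω) ^ 2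
        - 2 * (a (V (Sum.inl i) ω) * a (V (Sum.inr i) ω))) + a (V (Sum.inr i) ω) ^ 2 := by
      intro ω
      show (a (V (Sum.inl i) ω) - a (V (Sum.inr i) ω)) ^ 2 = _
      ring
    rw [integral_congr_ae (Filter.Eventually.of_forall he)]
    have hi1 : Integrable (fun ω => a (V (Sum.inl i) ω) ^ 2
        - 2 * (a (V (Sum.inl i) ω) * a (V (Sum.inr i) ω))) μ :=
      (hA2int _).sub (hABint.const_mul 2)
    rw [integral_add hi1 (hA2int _), integral_sub (hA2int _) (hABint.const_mul 2),
      integral_const_mul, hmul, hA2mean, hA2mean, hlam2]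
    ring
  -- bounds on lam
  have h2lam0 : 0 ≤ 2 * lam := by
    rw [← hEW ⟨0, hn⟩]
    exact integral_nonneg fun ω => hW0 _ _
  have h2lam4 : 2 * lam ≤ 4 * Mk := by
    rw [← hEW ⟨0, hn⟩]
    calc ∫ ω, W ⟨0, hn⟩ ω ∂μ ≤ ∫ _, 4 * Mk ∂μ :=
        integral_mono_ae (hWint _) (integrable_const _) (hWb _)
    _ = 4 * Mk := by simp
  by_cases hcase : δ ≤ (n : ℝ) ∧ 0 < Mk
  · -- main Chernoff case
    obtain ⟨hδn, hMkpos⟩ := hcase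
    set q : Zt → Zt → ℝ := fun u v => 2 * lam - (a u - a v) ^ 2 with hqdef
    have hq : Measurable fun p : Zt × Zt => q p.1 p.2 :=
      measurable_const.sub (((ham.comp measurable_fst).sub (ham.comp measurable_snd)).pow_const 2)
    set U : Fin n → Ω → ℝ := fun i ω => q (V (Sum.inl i) ω) (V (Sum.inr i) ω) with hUdef
    have hUW : ∀ i ω, U i ω = 2 * lam - W i ω := fun i ω => rfl
    have hUmeas : ∀ i, Measurable (U i) := fun i => measurable_const.sub (hWmeas i)
    have hUmean : ∀ i, ∫ ω, U i ω ∂μ = 0 := by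
      intro i
      have h1 : ∫ ω, U i ω ∂μ = ∫ ω, (2 * lam - W i ω) ∂μ := rfl
      rw [h1, integral_sub (integrable_const _) (hWint i), integral_const, hEW i]
      simp
    have hUbound : ∀ i, ∀ᵐ ω ∂μ, |U i ω| ≤ 4 * Mk := by
      intro i
      filter_upwards [hWb i] with ω h
      have h0 := hW0 i ω
      rw [hUW i ω, abs_le]
      constructor <;> linarith
    set s₀ : ℝ := Real.sqrt (δ / n) / (4 * Mk) with hs₀def
    have hδn0 : (0:ℝ) ≤ δ / n := by positivity
    have hsq : Real.sqrt (δ / n) ^ 2 = δ / n := Real.sq_sqrt hδn0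
    have hs₀0 : 0 ≤ s₀ := by positivity
    have hs₀c : s₀ * (4 * Mk) = Real.sqrt (δ / n) := by
      rw [hs₀def]
      field_simp
    have hsc1 : s₀ * (4 * Mk) ≤ 1 := by
      rw [hs₀c]
      have h1 : δ / n ≤ 1 := by rwa [div_le_one hnR]
      calc Real.sqrt (δ / n) ≤ Real.sqrt 1 := Real.sqrt_le_sqrt h1
      _ = 1 := Real.sqrt_one
    have hmgf_each : ∀ i, mgf (U i) μ s₀ ≤ Real.exp (s₀ ^ 2 * (4 * Mk) ^ 2) := fun i =>
      mgf_le_of_abs_le (hUmeas i) (by positivity) (hUbound i) (hUmean i) hs₀0 hsc1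
    have hprod : mgf (fun ω => ∑ j, U j ω) μ s₀ = ∏ j, mgf (U j) μ s₀ :=
      mgf_pair_sum hVmeas hVindep hq s₀ Finset.univ
    set Ssum : Ω → ℝ := fun ω => ∑ j, U j ω with hSdef
    have hSmeas : Measurable Ssum := Finset.measurable_sum _ fun j _ => hUmeas j
    have hSbound : ∀ᵐ ω ∂μ, |Ssum ω| ≤ n * (4 * Mk) := by
      have hall := MeasureTheory.ae_all_iff.mpr hUbound
      filter_upwards [hall] with ω h
      calc |Ssum ω| ≤ ∑ j, |U j ω| := Finset.abs_sum_le_sum_abs _ _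
      _ ≤ ∑ _j : Fin n, 4 * Mk := Finset.sum_le_sum fun j _ => h j
      _ = n * (4 * Mk) := by
          rw [Finset.sum_const, Finset.card_univ, Fintype.card_fin, nsmul_eq_mul]
    have hexpSint : Integrable (fun ω => Real.exp (s₀ * Ssum ω)) μ := by
      refine Integrable.mono' (integrable_const (Real.exp (s₀ * (n * (4 * Mk)))))
        ((hSmeas.const_mul s₀).exp).aestronglyMeasurable ?_
      filter_upwards [hSbound] with ω h
      rw [Real.norm_eq_abs, abs_of_pos (Real.exp_pos _), Real.exp_le_exp]
      nlinarith [(abs_le.1 h).2]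
    have hch := measure_ge_le_exp_mul_mgf (μ := μ) (X := Ssum) ((n : ℝ) * T) hs₀0 hexpSint
    have hsub : E' ⊆ {ω | (n : ℝ) * T ≤ Ssum ω} := by
      intro ω hω
      simp only [hE'def, Set.mem_setOf_eq] at hω
      simp only [Set.mem_setOf_eq]
      have hS : Ssum ω = (n : ℝ) * (2 * lam) - ∑ i, W i ω := by
        show (∑ j : Fin n, U j ω) = _
        rw [Finset.sum_congr rfl fun j (_ : j ∈ Finset.univ) => hUW j ω,
          Finset.sum_sub_distrib, Finset.sum_const,
          Finset.card_univ, Fintype.card_fin, nsmul_eq_mul]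
      have hninv : (n : ℝ) * (n : ℝ)⁻¹ = 1 := mul_inv_cancel₀ (ne_of_gt hnR)
      have h1 : ∑ i, W i ω < (n : ℝ) * (2 * lam - T) := by
        have h2 : (n : ℝ)⁻¹ * (∑ i, W i ω) < 2 * lam - T := by linarith
        calc ∑ i, W i ω = (n : ℝ) * ((n : ℝ)⁻¹ * ∑ i, W i ω) := by
              rw [← mul_assoc, hninv, one_mul]
        _ < (n : ℝ) * (2 * lam - T) := by
              exact mul_lt_mul_of_pos_left h2 hnR
      rw [hS]
      have h3 : (n : ℝ) * (2 * lam - T) = (n : ℝ) * (2 * lam) - (n : ℝ) * T := by ring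
      linarith
    have hmgfS : mgf Ssum μ s₀ ≤ Real.exp ((n : ℝ) * (s₀ ^ 2 * (4 * Mk) ^ 2)) := by
      rw [hprod]
      calc ∏ j, mgf (U j) μ s₀ ≤ ∏ _j : Fin n, Real.exp (s₀ ^ 2 * (4 * Mk) ^ 2) :=
          Finset.prod_le_prod (fun j _ => mgf_nonneg) (fun j _ => hmgf_each j)
      _ = Real.exp (s₀ ^ 2 * (4 * Mk) ^ 2) ^ (n : ℕ) := by
          rw [Finset.prod_const, Finset.card_univ, Fintype.card_fin]
      _ = Real.exp ((n : ℝ) * (s₀ ^ 2 * (4 * Mk) ^ 2)) := by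
          rw [← Real.exp_nat_mul]
    have hfinal : Real.exp (-s₀ * ((n : ℝ) * T)) * mgf Ssum μ s₀ ≤ Real.exp (-δ) := by
      have hstep : Real.exp (-s₀ * ((n : ℝ) * T)) * mgf Ssum μ s₀
          ≤ Real.exp (-s₀ * ((n : ℝ) * T)) * Real.exp ((n : ℝ) * (s₀ ^ 2 * (4 * Mk) ^ 2)) := by
        exact mul_le_mul_of_nonneg_left hmgfS (Real.exp_pos _).le
      refine hstep.trans ?_
      rw [← Real.exp_add, Real.exp_le_exp]
      have h2 : s₀ ^ 2 * (4 * Mk) ^ 2 = δ / n := by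
        rw [← mul_pow, hs₀c, hsq]
      have h1 : s₀ * T = 2 * (δ / n) := by
        have hT4 : T = 2 * (s₀ * (4 * Mk)) * (4 * Mk) := by
          rw [hs₀c, hTdef]; ring
        rw [hT4]
        calc s₀ * (2 * (s₀ * (4 * Mk)) * (4 * Mk)) = 2 * (s₀ ^ 2 * (4 * Mk) ^ 2) := by ring
        _ = 2 * (δ / n) := by rw [h2]
      have h3 : (n : ℝ) * (δ / n) = δ := by field_simp
      have h4 : -s₀ * ((n : ℝ) * T) = -(2 * δ) := by
        calc -s₀ * ((n : ℝ) * T) = -((n : ℝ) * (s₀ * T)) := by ring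
        _ = -((n : ℝ) * (2 * (δ / n))) := by rw [h1]
        _ = -(2 * ((n : ℝ) * (δ / n))) := by ring
        _ = -(2 * δ) := by rw [h3]
      rw [h2, h3, h4]
      linarith
    rw [hEE']
    calc μ E' ≤ μ {ω | (n : ℝ) * T ≤ Ssum ω} := measure_mono hsub
    _ = ENNReal.ofReal ((μ {ω | (n : ℝ) * T ≤ Ssum ω}).toReal) :=
        (ENNReal.ofReal_toReal (measure_ne_top _ _)).symm
    _ ≤ ENNReal.ofReal (Real.exp (-δ)) := ENNReal.ofReal_le_ofReal (hch.trans hfinal)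
  · -- degenerate case: the event is empty
    have hE0 : E = ∅ := by
      rw [Set.eq_empty_iff_forall_notMem]
      intro ω hω
      simp only [hEdef, Set.mem_setOf_eq] at hω
      have hnonneg : 0 ≤ (n : ℝ)⁻¹
          * (∑ i, ⟪f, φ (V (Sum.inl i) ω) - φ (V (Sum.inr i) ω)⟫ ^ 2) := by
        refine mul_nonneg (by positivity) ?_
        exact Finset.sum_nonneg fun i _ => sq_nonneg _
      have hT2lam : T < 2 * lam := by linarith
      push_neg at hcase
      rcases le_or_gt δ (n : ℝ) with h | h
      · have hMk : Mk = 0 := le_antisymm (hcase h) hMk0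
        rw [hTdef, hMk] at hT2lam
        rw [hMk] at h2lam4
        simp at hT2lam
        linarith
      · have h1 : 1 < Real.sqrt (δ / n) := by
          have : (1:ℝ) < δ / n := (one_lt_div hnR).mpr h
          calc (1:ℝ) = Real.sqrt 1 := Real.sqrt_one.symm
          _ < Real.sqrt (δ / n) := Real.sqrt_lt_sqrt (by norm_num) this
        have h2 : 0 ≤ Mk * (Real.sqrt (δ / n) - 1) :=
          mul_nonneg hMk0 (by linarith)
        rw [hTdef] at hT2lam
        nlinarith
    rw [hE0, measure_empty]
    exact zero_le
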